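/- Let E and W be real inner product spaces, R : E → ℝ differentiable with L-Lipschitz gradient ∇R (L > 0), and let 𝓛 : E × W → ℝ be differentiable in its first argument with gradient ∇_θ𝓛(θ; w) ∈ E. Let (θ_t)_{t≥0} in E and (w_t)_{t≥0} in W be sequences satisfying the update rule θ_{t+1} = θ_t − μ·∇_θ𝓛(θ_t; w_{t+1}) for all t, where μ ≥ 0. Suppose there is a constant k > 0 such that for every t, ⟨∇R(θ_t), ∇_θ𝓛(θ_t; w_{t+1})⟩ ≥ k·‖∇_θ𝓛(θ_t; w_{t+1})‖². If μ ≤ 2k/L, then the risk decreases monotonically: R(θ_{t+1}) ≤ R(θ_t) for every t. -/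

import Mathlib

open RealInnerProductSpace

lemma descent_lemma {E : Type*} [NormedAddCommGroup E] [InnerProductSpace ℝ E]
    (R : E → ℝ) (R' : E → E) (L : ℝ) (hL : 0 ≤ L)
    (hRdiff : ∀ x, HasFDerivAt R (innerSL ℝ (R' x)) x)
    (hRlip : ∀ x y, ‖R' x - R' y‖ ≤ L * ‖x - y‖)
    (x v : E) :
    R (x + v) ≤ R x + ⟪R' x, v⟫ + L / 2 * ‖v‖ ^ 2 := by
  have hcontR' : Continuous R' := by
    have : LipschitzWith L.toNNReal R' := by
      intro a b
      rw [edist_nndist, edist_nndist, ← ENNReal.coe_mul, ENNReal.coe_le_coe,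
        ← NNReal.coe_le_coe]
      push_cast
      calc dist (R' a) (R' b) = ‖R' a - R' b‖ := by rw [dist_eq_norm]
        _ ≤ L * ‖a - b‖ := hRlip a b
        _ ≤ L.toNNReal * dist a b := by
            rw [dist_eq_norm]
            gcongr
            exact Real.le_coe_toNNReal L
    exact this.continuous
  set φ : ℝ → ℝ := fun s => R (x + s • v) with hφ
  have hderiv : ∀ s : ℝ, HasDerivAt φ (⟪R' (x + s • v), v⟫) s := by
    intro s
    have hpath : HasDerivAt (fun s : ℝ => x + s • v) v s := by
      simpa using ((hasDerivAt_id s).smul_const v).const_add x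
    have := (hRdiff (x + s • v)).comp_hasDerivAt s hpath
    exact this
  have hcont : Continuous fun s : ℝ => ⟪R' (x + s • v), v⟫ := by
    exact (Continuous.inner (hcontR'.comp (by continuity)) continuous_const)
  have hint : ∫ s in (0:ℝ)..1, ⟪R' (x + s • v), v⟫ = φ 1 - φ 0 :=
    intervalIntegral.integral_eq_sub_of_hasDerivAt (fun s _ => hderiv s)
      (hcont.intervalIntegrable 0 1)
  have hbound : ∫ s in (0:ℝ)..1, ⟪R' (x + s • v), v⟫ ≤
      ∫ s in (0:ℝ)..1, (⟪R' x, v⟫ + L * s * ‖v‖ ^ 2) := by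
    apply intervalIntegral.integral_mono_on (by norm_num)
      (hcont.intervalIntegrable 0 1)
      (by apply Continuous.intervalIntegrable; continuity)
    intro s hs
    have : ⟪R' (x + s • v), v⟫ - ⟪R' x, v⟫ ≤ L * s * ‖v‖ ^ 2 := by
      rw [← inner_sub_left]
      calc ⟪R' (x + s • v) - R' x, v⟫ ≤ ‖R' (x + s • v) - R' x‖ * ‖v‖ :=
            real_inner_le_norm _ _
        _ ≤ (L * ‖(x + s • v) - x‖) * ‖v‖ := by gcongr; exact hRlip _ _
        _ = L * (|s| * ‖v‖) * ‖v‖ := by rw [add_sub_cancel_left, norm_smul]; norm_num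
        _ = L * |s| * ‖v‖ ^ 2 := by ring
        _ = L * s * ‖v‖ ^ 2 := by rw [abs_of_nonneg hs.1]
    linarith
  have hval : ∫ s in (0:ℝ)..1, (⟪R' x, v⟫ + L * s * ‖v‖ ^ 2) =
      ⟪R' x, v⟫ + L / 2 * ‖v‖ ^ 2 := by
    rw [intervalIntegral.integral_add (by apply Continuous.intervalIntegrable; continuity)
      (by apply Continuous.intervalIntegrable; continuity)]
    have h2 : (fun s : ℝ => L * s * ‖v‖ ^ 2) = fun s : ℝ => (L * ‖v‖ ^ 2) * s := by
      funext s; ring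
    rw [h2, intervalIntegral.integral_const_mul, integral_id]
    simp
    ring
  have h0 : φ 0 = R x := by simp [hφ]
  have h1 : φ 1 = R (x + v) := by simp [hφ]
  nlinarith [hint, hbound, hval]

/-- **Theorem 1 (Convergence).** Under the Lipschitz-smoothness of the risk `R`
(Assumption 1) and the inner-product lower bound (Assumption 2), the inner-loop
updates `θ_{t+1} = θ_t - μ • ∇_θ𝓛(θ_t; w_{t+1})` with step size `μ ≤ 2k/L`
make the risk monotonically decrease: `R (θ (t+1)) ≤ R (θ t)` for every `t`. -/
theorem bilevel_convergence
    {E W : Type*} [NormedAddCommGroup E] [InnerProductSpace ℝ E]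
    [NormedAddCommGroup W] [InnerProductSpace ℝ W]
    (R : E → ℝ) (R' : E → E) (L : ℝ) (hL : 0 < L)
    (hRdiff : ∀ x, HasFDerivAt R (innerSL ℝ (R' x)) x)
    (hRlip : ∀ x y, ‖R' x - R' y‖ ≤ L * ‖x - y‖)
    (𝓛 : E → W → ℝ) (𝓛' : E → W → E)
    (h𝓛diff : ∀ θ₀ w₀, HasFDerivAt (fun θ => 𝓛 θ w₀) (innerSL ℝ (𝓛' θ₀ w₀)) θ₀)
    (θ : ℕ → E) (w : ℕ → W) (μ : ℝ) (hμ : 0 ≤ μ)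
    (hupd : ∀ t, θ (t + 1) = θ t - μ • 𝓛' (θ t) (w (t + 1)))
    (k : ℝ) (hk : 0 < k)
    (hinner : ∀ t, ⟪R' (θ t), 𝓛' (θ t) (w (t + 1))⟫ ≥ k * ‖𝓛' (θ t) (w (t + 1))‖ ^ 2)
    (hstep : μ ≤ 2 * k / L) :
    ∀ t, R (θ (t + 1)) ≤ R (θ t) := by
  intro t
  set g := 𝓛' (θ t) (w (t + 1)) with hg
  have hupd' : θ (t + 1) = θ t + (-(μ • g)) := by rw [hupd t]; abel
  have hdesc := descent_lemma R R' L hL.le hRdiff hRlip (θ t) (-(μ • g))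
  rw [← hupd'] at hdesc
  have hin : ⟪R' (θ t), -(μ • g)⟫ = -(μ * ⟪R' (θ t), g⟫) := by
    rw [inner_neg_right, real_inner_smul_right]
  have hnorm : ‖-(μ • g)‖ ^ 2 = μ ^ 2 * ‖g‖ ^ 2 := by
    rw [norm_neg, norm_smul]
    simp [abs_of_nonneg hμ, mul_pow]
  rw [hin, hnorm] at hdesc
  have hμL : μ * L ≤ 2 * k := by
    calc μ * L ≤ 2 * k / L * L := by gcongr
      _ = 2 * k := by field_simp
  have hIP := hinner t
  have hg2 : (0:ℝ) ≤ ‖g‖ ^ 2 := sq_nonneg _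
  nlinarith [mul_nonneg hμ hg2, sq_nonneg μ]
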